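/- Let A be an object of a triangulated category C and L an autoequivalence with a natural transformation p : id → L∘[1]-shifted target, such that the total complex (iterated cone) N(p₁)∘N(p₂)∘⋯∘N(p_ℓ)(A) ≅ 0 where N(p_a)(X) = Cone(p_a : X → L^{d_a}(X)[2]). Then in the Grothendieck group K(C), the class [A] satisfies ∏_{a=1}^{ℓ}(L^{d_a} − id)[A] = 0, where L also denotes the induced automorphism of K(C). -/

import Mathlib

open CategoryTheory CategoryTheory.Limits CategoryTheory.Pretriangulated
open ZeroObject

/-- `n`-th iterate of an endofunctor. -/
def funPow {C : Type*} [Category C] (F : C ⥤ C) : ℕ → C ⥤ C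
  | 0 => 𝟭 C
  | n + 1 => funPow F n ⋙ F

/-- Let `C` be a triangulated category with Grothendieck group `K` (modelled by a class
function `cl` additive on distinguished triangles, with `[1]` acting by `−1`), `L` an
autoequivalence inducing `lK` on `K`, and for each `a` an endofunctor `N a` fitting in
distinguished triangles `X ⟶ L^{dₐ}(X)[2] ⟶ N a (X) ⟶ X[1]`. If the iterated cone
`N(p₁)∘⋯∘N(p_ℓ)(A) ≅ 0`, then `∏ₐ (lK^{dₐ} − id) [A] = 0` in `K`. -/
theorem iterated_cone_Ktheory_relation {C : Type*} [Category C] [HasZeroObject C]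
    [Preadditive C] [HasShift C ℤ] [∀ n : ℤ, (shiftFunctor C n).Additive]
    [Pretriangulated C]
    {K : Type*} [AddCommGroup K] (cl : C → K)
    (hcl : ∀ T ∈ distTriang C, cl T.obj₂ = cl T.obj₁ + cl T.obj₃)
    (hshift : ∀ X : C, cl (X⟦(1 : ℤ)⟧) = - cl X)
    (L : C ⥤ C) [L.IsEquivalence] (lK : Module.End ℤ K)
    (hlK : ∀ X : C, cl (L.obj X) = lK (cl X))
    (ℓ : ℕ) (d : Fin ℓ → ℕ) (hd : ∀ a, 1 ≤ d a)
    (N : Fin ℓ → C ⥤ C)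
    (hN : ∀ (a : Fin ℓ) (X : C),
      ∃ (f : X ⟶ ((funPow L (d a)).obj X)⟦(2 : ℤ)⟧)
        (g : ((funPow L (d a)).obj X)⟦(2 : ℤ)⟧ ⟶ (N a).obj X)
        (h : (N a).obj X ⟶ X⟦(1 : ℤ)⟧),
        Triangle.mk f g h ∈ distTriang C)
    (A : C)
    (hzero : IsZero (((List.finRange ℓ).foldr (fun a F => N a ⋙ F) (𝟭 C)).obj A)) :
    (((List.finRange ℓ).map fun a => lK ^ d a - 1).prod) (cl A) = 0 := by
  -- `cl 0 = 0`
  have hcl0 : cl (0 : C) = 0 := by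
    have h := hcl _ (contractible_distinguished (0 : C))
    simp only [contractibleTriangle] at h
    -- h : cl 0 = cl 0 + cl 0
    exact (left_eq_add.mp h)
  -- `cl` is invariant under isomorphism
  have hiso : ∀ (X Y : C), (X ≅ Y) → cl X = cl Y := by
    intro X Y e
    have hd : Triangle.mk e.hom (0 : Y ⟶ (0 : C)) (0 : (0 : C) ⟶ X⟦(1 : ℤ)⟧)
        ∈ distTriang C := by
      refine isomorphic_distinguished _ (contractible_distinguished X) _ ?_
      refine Triangle.isoMk _ _ (Iso.refl X) e.symm (Iso.refl 0) ?_ ?_ ?_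
      · exact e.hom_inv_id.trans (Category.id_comp _).symm
      · exact (isZero_zero C).eq_of_tgt _ _
      · exact (isZero_zero C).eq_of_src _ _
    have h := hcl _ hd
    simp only [Triangle.mk_obj₁, Triangle.mk_obj₂, Triangle.mk_obj₃, hcl0, add_zero] at h
    exact h.symm
  -- `cl` vanishes on zero objects
  have hclz : ∀ (X : C), IsZero X → cl X = 0 := fun X hX => (hiso X 0 hX.isoZero).trans hcl0
  -- `cl` on double shift
  have hshift2 : ∀ X : C, cl (X⟦(2 : ℤ)⟧) = cl X := by
    intro X
    have e : X⟦(2 : ℤ)⟧ ≅ (X⟦(1 : ℤ)⟧)⟦(1 : ℤ)⟧ :=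
      (shiftFunctorAdd' C 1 1 2 (by norm_num)).app X
    rw [hiso _ _ e, hshift, hshift, neg_neg]
  -- `cl` on iterates of `L`
  have hpow : ∀ (n : ℕ) (X : C), cl ((funPow L n).obj X) = (lK ^ n) (cl X) := by
    intro n
    induction n with
    | zero => intro X; simp [funPow]
    | succ n ih =>
        intro X
        show cl (L.obj ((funPow L n).obj X)) = _
        rw [hlK, ih, pow_succ']
        rfl
  -- `cl` on the cones
  have hNcl : ∀ (a : Fin ℓ) (X : C), cl ((N a).obj X) = (lK ^ d a - 1) (cl X) := by
    intro a X
    obtain ⟨f, g, h, hT⟩ := hN a X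
    have := hcl _ hT
    simp only [Triangle.mk_obj₁, Triangle.mk_obj₂, Triangle.mk_obj₃, hshift2, hpow] at this
    rw [LinearMap.sub_apply, Module.End.one_apply]
    exact eq_sub_of_add_eq' this.symm
  -- factors commute
  have hcomm : ∀ (a b : Fin ℓ), Commute (lK ^ d a - 1) (lK ^ d b - 1) := by
    intro a b
    exact (((Commute.refl lK).pow_pow _ _).sub_left (Commute.one_left _)).sub_right
      (Commute.one_right _)
  -- main induction
  have main : ∀ (l : List (Fin ℓ)) (X : C),
      cl ((l.foldr (fun a F => N a ⋙ F) (𝟭 C)).obj X)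
        = ((l.map fun a => lK ^ d a - 1).prod) (cl X) := by
    intro l
    induction l with
    | nil => intro X; simp
    | cons a t ih =>
        intro X
        have h1 : cl (((a :: t).foldr (fun a F => N a ⋙ F) (𝟭 C)).obj X)
            = ((t.map fun a => lK ^ d a - 1).prod) (cl ((N a).obj X)) := ih _
        rw [h1, hNcl]
        have hc : Commute (lK ^ d a - 1) ((t.map fun a => lK ^ d a - 1).prod) := by
          refine Commute.list_prod_right _ _ ?_
          intro x hx
          obtain ⟨b, _, rfl⟩ := List.mem_map.mp hx
          exact hcomm a b
        rw [List.map_cons, List.prod_cons, hc.eq]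
        rfl
  rw [← main, hclz _ hzero]
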